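/- Let P ∈ ℚ[t] be a polynomial. The following are equivalent: (a) for every n ≥ 1 and every sum of signs φ : ℝ^n → ℤ, the function x ↦ P(φ(x)) takes integer values and is itself a sum of signs; (b) P = Σ_{p=0}^N n_p f_p where each n_p is an integer divisible by 2^{⌊p/2⌋}. -/

import Mathlib

open Polynomial

/-- The integer-valued sign of a real number. -/
noncomputable def sgn (r : ℝ) : ℤ := if r < 0 then -1 else if 0 < r then 1 else 0

/-- A function `φ : ℝ^n → ℤ` is a sum of signs if it is a finite sum of signs of
polynomials. -/
def IsSumOfSigns {n : ℕ} (φ : (Fin n → ℝ) → ℤ) : Prop :=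
  ∃ (s : ℕ) (g : Fin s → MvPolynomial (Fin n) ℝ),
    ∀ x, φ x = ∑ i : Fin s, sgn (MvPolynomial.eval x (g i))

/-- The `p`-th binomial polynomial `f_p(t) = t(t−1)⋯(t−p+1)/p!`. -/
noncomputable def binomPoly (p : ℕ) : Polynomial ℚ :=
  ((p.factorial : ℚ)⁻¹) • descPochhammer ℚ p


/-! ### sgn lemmas -/

lemma sgn_of_pos {r : ℝ} (h : 0 < r) : sgn r = 1 := by simp [sgn, h, not_lt.mpr h.le]
lemma sgn_of_neg {r : ℝ} (h : r < 0) : sgn r = -1 := by simp [sgn, h]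
lemma sgn_zero : sgn 0 = 0 := by simp [sgn]
lemma sgn_one : sgn 1 = 1 := sgn_of_pos one_pos
lemma sgn_neg_one : sgn (-1) = -1 := sgn_of_neg (by norm_num)

lemma sgn_cases (r : ℝ) : sgn r = -1 ∨ sgn r = 0 ∨ sgn r = 1 := by
  rcases lt_trichotomy r 0 with h | h | h
  · exact Or.inl (sgn_of_neg h)
  · subst h; exact Or.inr (Or.inl sgn_zero)
  · exact Or.inr (Or.inr (sgn_of_pos h))

lemma sgn_mul (a b : ℝ) : sgn (a * b) = sgn a * sgn b := by
  rcases lt_trichotomy a 0 with ha | ha | ha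
  · rcases lt_trichotomy b 0 with hb | hb | hb
    · rw [sgn_of_pos (mul_pos_of_neg_of_neg ha hb), sgn_of_neg ha, sgn_of_neg hb]; ring
    · simp [hb, sgn_zero]
    · rw [sgn_of_neg (mul_neg_of_neg_of_pos ha hb), sgn_of_neg ha, sgn_of_pos hb]; ring
  · simp [ha, sgn_zero]
  · rcases lt_trichotomy b 0 with hb | hb | hb
    · rw [sgn_of_neg (mul_neg_of_pos_of_neg ha hb), sgn_of_pos ha, sgn_of_neg hb]; ring
    · simp [hb, sgn_zero]
    · rw [sgn_of_pos (mul_pos ha hb), sgn_of_pos ha, sgn_of_pos hb]; ring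

/-! ### closure lemmas -/

section closure
variable {n : ℕ}

lemma isss_congr {ψ₁ ψ₂ : (Fin n → ℝ) → ℤ} (h : ∀ x, ψ₁ x = ψ₂ x)
    (h1 : IsSumOfSigns ψ₁) : IsSumOfSigns ψ₂ := by
  obtain ⟨s, g, hg⟩ := h1
  exact ⟨s, g, fun x => (h x) ▸ hg x⟩

lemma isss_sgn (g : MvPolynomial (Fin n) ℝ) :
    IsSumOfSigns (fun x => sgn (MvPolynomial.eval x g)) :=
  ⟨1, fun _ => g, fun x => by simp⟩

lemma isss_const (c : ℤ) : IsSumOfSigns (fun _ : Fin n → ℝ => c) := by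
  refine ⟨c.natAbs, fun _ => MvPolynomial.C (c.sign : ℝ), fun x => ?_⟩
  simp only [MvPolynomial.eval_C, Finset.sum_const, Finset.card_univ, Fintype.card_fin, smul_eq_mul]
  rcases lt_trichotomy c 0 with h | h | h
  · rw [Int.sign_eq_neg_one_of_neg h]
    push_cast
    rw [sgn_neg_one, nsmul_eq_mul, Int.ofNat_natAbs_of_nonpos h.le]
    ring
  · simp [h, sgn_zero]
  · rw [Int.sign_eq_one_of_pos h]
    push_cast
    rw [sgn_one, nsmul_eq_mul, Int.natAbs_of_nonneg h.le]
    ring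

lemma isss_add {ψ₁ ψ₂ : (Fin n → ℝ) → ℤ} (h1 : IsSumOfSigns ψ₁) (h2 : IsSumOfSigns ψ₂) :
    IsSumOfSigns (fun x => ψ₁ x + ψ₂ x) := by
  obtain ⟨s₁, g₁, hg₁⟩ := h1
  obtain ⟨s₂, g₂, hg₂⟩ := h2
  refine ⟨s₁ + s₂, Fin.append g₁ g₂, fun x => ?_⟩
  rw [Fin.sum_univ_add]
  simp only [Fin.append_left, Fin.append_right]
  rw [hg₁, hg₂]

lemma isss_mul {ψ₁ ψ₂ : (Fin n → ℝ) → ℤ} (h1 : IsSumOfSigns ψ₁) (h2 : IsSumOfSigns ψ₂) :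
    IsSumOfSigns (fun x => ψ₁ x * ψ₂ x) := by
  obtain ⟨s₁, g₁, hg₁⟩ := h1
  obtain ⟨s₂, g₂, hg₂⟩ := h2
  refine ⟨s₁ * s₂, fun k => g₁ (finProdFinEquiv.symm k).1 * g₂ (finProdFinEquiv.symm k).2,
    fun x => ?_⟩
  calc ψ₁ x * ψ₂ x
      = ∑ q : Fin s₁ × Fin s₂, sgn (MvPolynomial.eval x (g₁ q.1)) * sgn (MvPolynomial.eval x (g₂ q.2)) := by
        rw [hg₁, hg₂, Finset.sum_mul_sum, ← Fintype.sum_prod_type']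
    _ = _ := Fintype.sum_equiv finProdFinEquiv.symm _ _ (fun k => by
        rw [map_mul, sgn_mul]) |>.symm

lemma isss_zsmul (c : ℤ) {ψ : (Fin n → ℝ) → ℤ} (h : IsSumOfSigns ψ) :
    IsSumOfSigns (fun x => c * ψ x) :=
  isss_mul (isss_const c) h

lemma isss_neg {ψ : (Fin n → ℝ) → ℤ} (h : IsSumOfSigns ψ) :
    IsSumOfSigns (fun x => -ψ x) :=
  isss_congr (fun x => by ring) (isss_zsmul (-1) h)

lemma isss_sub {ψ₁ ψ₂ : (Fin n → ℝ) → ℤ} (h1 : IsSumOfSigns ψ₁) (h2 : IsSumOfSigns ψ₂) :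
    IsSumOfSigns (fun x => ψ₁ x - ψ₂ x) :=
  isss_congr (fun x => by ring) (isss_add h1 (isss_neg h2))

lemma isss_sum {ι : Type*} (t : Finset ι) (ψ : ι → (Fin n → ℝ) → ℤ)
    (h : ∀ i ∈ t, IsSumOfSigns (ψ i)) :
    IsSumOfSigns (fun x => ∑ i ∈ t, ψ i x) := by
  classical
  induction t using Finset.induction_on with
  | empty => exact isss_congr (fun x => by simp) (isss_const 0)
  | insert _ _ hnotmem ih =>
    rename_i a t'
    refine isss_congr (fun x => ?_) (isss_add (h a (Finset.mem_insert_self a t'))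
      (ih (fun i hi => h i (Finset.mem_insert_of_mem hi))))
    rw [Finset.sum_insert hnotmem]

lemma isss_prod {ι : Type*} (t : Finset ι) (ψ : ι → (Fin n → ℝ) → ℤ)
    (h : ∀ i ∈ t, IsSumOfSigns (ψ i)) :
    IsSumOfSigns (fun x => ∏ i ∈ t, ψ i x) := by
  classical
  induction t using Finset.induction_on with
  | empty => exact isss_congr (fun x => by simp) (isss_const 1)
  | insert _ _ hnotmem ih =>
    rename_i a t'
    refine isss_congr (fun x => ?_) (isss_mul (h a (Finset.mem_insert_self a t'))
      (ih (fun i hi => h i (Finset.mem_insert_of_mem hi))))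
    rw [Finset.prod_insert hnotmem]

end closure
/-! ### rational binomial coefficients -/

noncomputable def Ch (a : ℚ) (p : ℕ) : ℚ := (binomPoly p).eval a

lemma Ch_def (a : ℚ) (p : ℕ) :
    Ch a p = (p.factorial : ℚ)⁻¹ * (descPochhammer ℚ p).eval a := by
  simp [Ch, binomPoly]

lemma Ch_zero_right (a : ℚ) : Ch a 0 = 1 := by
  simp [Ch_def, descPochhammer_zero]

lemma Ch_pascal (a : ℚ) (p : ℕ) : Ch (a + 1) (p + 1) = Ch a (p + 1) + Ch a p := by
  have hfac : (((p+1).factorial : ℚ)) = (p+1) * p.factorial := by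
    rw [Nat.factorial_succ]; push_cast; ring
  have h1 : (descPochhammer ℚ (p+1)).eval (a+1) = (a+1) * (descPochhammer ℚ p).eval a := by
    rw [descPochhammer_succ_left]
    simp [Polynomial.eval_comp]
  have h2 : (descPochhammer ℚ (p+1)).eval a = (descPochhammer ℚ p).eval a * (a - p) :=
    descPochhammer_succ_eval p a
  have h0 : (p.factorial : ℚ) ≠ 0 := by exact_mod_cast p.factorial_ne_zero
  have h0' : ((p:ℚ)+1) ≠ 0 := by positivity
  rw [Ch_def, Ch_def, Ch_def, h1, h2, hfac]
  field_simp
  ring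

lemma Ch_nat (e p : ℕ) : Ch (e : ℚ) p = (e.choose p : ℚ) := by
  have h0 : (p.factorial : ℚ) ≠ 0 := by exact_mod_cast p.factorial_ne_zero
  rw [Ch_def, descPochhammer_eval_eq_descFactorial ℚ e p,
    Nat.descFactorial_eq_factorial_mul_choose]
  push_cast
  field_simp

lemma Ch_zero_left (p : ℕ) : Ch 0 p = if p = 0 then 1 else 0 := by
  have := Ch_nat 0 p
  push_cast at this
  rw [this]
  cases p with
  | zero => simp
  | succ q => simp [Nat.choose_eq_zero_of_lt (Nat.succ_pos q)]

lemma Ch_alt (a : ℚ) (p : ℕ) :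
    ∑ j ∈ Finset.range (p+1), (-1:ℚ)^j * Ch a (p - j) = Ch (a-1) p := by
  induction p with
  | zero => simp [Ch_zero_right]
  | succ p ih =>
    rw [Finset.sum_range_succ']
    have h1 : ∀ j ∈ Finset.range (p+1), (-1:ℚ)^(j+1) * Ch a (p + 1 - (j+1))
        = -((-1:ℚ)^j * Ch a (p - j)) := by
      intro j hj
      have hh : p + 1 - (j+1) = p - j := by omega
      rw [hh, pow_succ]
      ring
    rw [Finset.sum_congr rfl h1, Finset.sum_neg_distrib, ih]
    have hp : Ch ((a-1) + 1) (p+1) = Ch (a-1) (p+1) + Ch (a-1) p := Ch_pascal (a-1) p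
    rw [sub_add_cancel] at hp
    simp only [pow_zero, one_mul, Nat.sub_zero]
    linarith [hp]

lemma Ch_sigma (a σ : ℚ) (hσ : σ = -1 ∨ σ = 0 ∨ σ = 1) (q : ℕ) :
    Ch (a + σ) (q+1) = Ch a (q+1) + σ * Ch a q
      + ((σ*σ - σ)/2) * ∑ j ∈ Finset.Icc 2 (q+1), (-1:ℚ)^j * Ch a (q+1-j) := by
  rcases hσ with h | h | h
  · subst h
    have halt := Ch_alt a (q+1)
    -- split range (q+2) = {0} ∪ {1} ∪ Icc 2 (q+1)
    rw [Finset.sum_range_succ'] at halt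
    -- now: ∑ j in range (q+1), (-1)^(j+1) * Ch a (q+1-(j+1)) + (-1)^0 * Ch a (q+1-0) = Ch (a-1) (q+1)
    rw [Finset.sum_range_succ'] at halt
    have e2 : ∀ j ∈ Finset.range q, (-1:ℚ)^(j+1+1) * Ch a (q + 1 - (j+1+1))
        = (-1:ℚ)^(j+2) * Ch a (q-1-j) := by
      intro j hj
      congr 2
      omega
    rw [Finset.sum_congr rfl e2] at halt
    have e3 : ∑ j ∈ Finset.Icc 2 (q+1), (-1:ℚ)^j * Ch a (q+1-j)
        = ∑ j ∈ Finset.range q, (-1:ℚ)^(j+2) * Ch a (q-1-j) := by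
      rw [Finset.sum_bij' (fun j _ => j - 2) (fun j _ => j + 2)]
      · intro j hj; simp only [Finset.mem_Icc] at hj; simp only [Finset.mem_range]; omega
      · intro j hj; simp only [Finset.mem_range] at hj; simp only [Finset.mem_Icc]; omega
      · intro j hj; simp only [Finset.mem_Icc] at hj; omega
      · intro j hj; omega
      · intro j hj
        simp only [Finset.mem_Icc] at hj
        congr 2
        · omega
        · omega
    rw [e3]
    have : a + (-1) = a - 1 := by ring
    rw [this]
    rw [← halt]
    simp only [pow_zero, pow_one, one_mul, Nat.sub_zero, Nat.add_sub_cancel]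
    ring
  · subst h; simp
  · subst h
    rw [Ch_pascal a q]
    ring

/-! ### key lemma: 2^(p/2) * binom(φ, p) is a sum of signs -/

lemma key_pow2 {n : ℕ} : ∀ (s : ℕ) (g : Fin s → MvPolynomial (Fin n) ℝ) (p : ℕ),
    ∃ ψ : (Fin n → ℝ) → ℤ, IsSumOfSigns ψ ∧
      ∀ x, (ψ x : ℚ) = 2^(p/2) * Ch (∑ i : Fin s, (sgn (MvPolynomial.eval x (g i)) : ℚ)) p := by
  intro s
  induction s with
  | zero =>
    intro g p
    refine ⟨fun _ => if p = 0 then 1 else 0, isss_congr (fun x => rfl)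
      (by split <;> exact isss_const _), fun x => ?_⟩
    simp only [Finset.univ_eq_empty, Finset.sum_empty, Ch_zero_left]
    split <;> simp_all
  | succ s ih =>
    intro g p
    obtain ⟨Ψ, hΨ⟩ := Classical.axiomOfChoice (ih (fun i => g i.castSucc))
    have hΨs : ∀ r, IsSumOfSigns (Ψ r) := fun r => (hΨ r).1
    have hΨe : ∀ r x, ((Ψ r x : ℚ)) = 2^(r/2) *
        Ch (∑ i : Fin s, (sgn (MvPolynomial.eval x (g i.castSucc)) : ℚ)) r := fun r => (hΨ r).2
    rcases p with _ | q
    · refine ⟨fun _ => 1, isss_const 1, fun x => ?_⟩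
      simp [Ch_zero_right]
    · -- p = q + 1 ≥ 1
      set σf : (Fin n → ℝ) → ℤ := fun x => sgn (MvPolynomial.eval x (g (Fin.last s))) with hσf
      refine ⟨fun x => Ψ (q+1) x + 2^((q+1)/2 - q/2) * (σf x * Ψ q x)
        + ∑ j ∈ Finset.Icc 2 (q+1),
            ((-1)^j * 2^((q+1)/2 - 1 - (q+1-j)/2)) * ((σf x * σf x - σf x) * Ψ (q+1-j) x),
        ?_, fun x => ?_⟩
      · refine isss_add (isss_add (hΨs (q+1)) ?_) ?_
        · exact isss_zsmul _ (isss_mul (isss_sgn _) (hΨs q))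
        · refine isss_sum _ _ (fun j _ => ?_)
          exact isss_zsmul _ (isss_mul (isss_sub (isss_mul (isss_sgn _) (isss_sgn _)) (isss_sgn _))
            (hΨs (q+1-j)))
      · -- pointwise computation
        rw [Fin.sum_univ_castSucc]
        set a : ℚ := ∑ i : Fin s, (sgn (MvPolynomial.eval x (g i.castSucc)) : ℚ) with ha
        set σ : ℚ := ((σf x : ℤ) : ℚ) with hσ
        have hσc : σ = -1 ∨ σ = 0 ∨ σ = 1 := by
          rcases sgn_cases (MvPolynomial.eval x (g (Fin.last s))) with h | h | h <;>
            simp [hσ, hσf, h]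
        push_cast
        rw [Ch_sigma a σ hσc q]
        rw [hΨe (q+1) x, hΨe q x]
        have h1 : (2:ℚ)^((q+1)/2 - q/2) * 2^(q/2) = 2^((q+1)/2) := by
          rw [← pow_add]; congr 1; omega
        have hsum : ∑ j ∈ Finset.Icc 2 (q+1),
            ((-1:ℚ)^j * 2^((q+1)/2 - 1 - (q+1-j)/2)) * ((σ * σ - σ) * (Ψ (q+1-j) x : ℚ))
            = 2^((q+1)/2) * (((σ*σ - σ)/2) * ∑ j ∈ Finset.Icc 2 (q+1), (-1:ℚ)^j * Ch a (q+1-j)) := by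
          rw [Finset.mul_sum, Finset.mul_sum]
          refine Finset.sum_congr rfl (fun j hj => ?_)
          simp only [Finset.mem_Icc] at hj
          rw [hΨe (q+1-j) x]
          have h2 : (2:ℚ)^((q+1)/2) = 2^((q+1)/2 - 1 - (q+1-j)/2) * 2^((q+1-j)/2) * 2 := by
            rw [← pow_add, ← pow_succ]; congr 1; omega
          rw [h2]
          ring
        calc (2:ℚ)^((q+1)/2) * Ch a (q+1) + 2^((q+1)/2 - q/2) * (σ * (2^(q/2) * Ch a q))
              + ∑ j ∈ Finset.Icc 2 (q+1),
                ((-1:ℚ)^j * 2^((q+1)/2 - 1 - (q+1-j)/2)) * ((σ * σ - σ) * (Ψ (q+1-j) x : ℚ))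
            = 2^((q+1)/2) * Ch a (q+1) + 2^((q+1)/2) * (σ * Ch a q)
              + 2^((q+1)/2) * (((σ*σ - σ)/2) * ∑ j ∈ Finset.Icc 2 (q+1), (-1:ℚ)^j * Ch a (q+1-j)) := by
              rw [hsum, ← h1]; ring
          _ = 2^((q+1)/2) * (Ch a (q+1) + σ * Ch a q
              + ((σ*σ - σ)/2) * ∑ j ∈ Finset.Icc 2 (q+1), (-1:ℚ)^j * Ch a (q+1-j)) := by ring

/-! ### direction (b) ⇒ (a) -/

lemma dir_ba (P : Polynomial ℚ) (N : ℕ) (np : ℕ → ℤ) (hdvd : ∀ p, (2:ℤ)^(p/2) ∣ np p)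
    (hP : P = ∑ p ∈ Finset.range (N+1), (np p : ℚ) • binomPoly p) :
    ∀ n : ℕ, 1 ≤ n → ∀ φ : (Fin n → ℝ) → ℤ, IsSumOfSigns φ →
      ∃ ψ : (Fin n → ℝ) → ℤ, IsSumOfSigns ψ ∧ ∀ x, (ψ x : ℚ) = P.eval ((φ x : ℚ)) := by
  intro n hn φ hφ
  obtain ⟨s, g, hg⟩ := hφ
  obtain ⟨Ψ, hΨ⟩ := Classical.axiomOfChoice (key_pow2 s g)
  choose m hm using hdvd
  refine ⟨fun x => ∑ p ∈ Finset.range (N+1), m p * Ψ p x,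
    isss_sum _ _ (fun p _ => isss_zsmul _ (hΨ p).1), fun x => ?_⟩
  rw [hP, Polynomial.eval_finset_sum]
  push_cast
  refine Finset.sum_congr rfl (fun p _ => ?_)
  rw [(hΨ p).2 x]
  have hφx : ((φ x : ℤ) : ℚ) = ∑ i : Fin s, (sgn (MvPolynomial.eval x (g i)) : ℚ) := by
    rw [hg x]; push_cast; rfl
  rw [Polynomial.eval_smul, smul_eq_mul, ← Ch, hφx, hm p]
  push_cast
  ring

/-! ### eventual signs -/

lemma sgn_neg' (a : ℝ) : sgn (-a) = - sgn a := by
  rcases lt_trichotomy a 0 with h | h | h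
  · rw [sgn_of_neg h, sgn_of_pos (by linarith : (0:ℝ) < -a)]; ring
  · simp [h, sgn_zero]
  · rw [sgn_of_pos h, sgn_of_neg (by linarith : -a < 0)]

lemma sgn_eq_zero_iff {a : ℝ} : sgn a = 0 ↔ a = 0 := by
  constructor
  · intro h
    rcases lt_trichotomy a 0 with hh | hh | hh
    · rw [sgn_of_neg hh] at h; omega
    · exact hh
    · rw [sgn_of_pos hh] at h; omega
  · rintro rfl; exact sgn_zero

open Filter in
lemma evsign (q : Polynomial ℝ) :
    ∀ᶠ t in atTop, sgn (q.eval t) = sgn q.leadingCoeff := by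
  have key : ∀ q : Polynomial ℝ, 0 < q.leadingCoeff →
      ∀ᶠ t in atTop, sgn (q.eval t) = sgn q.leadingCoeff := by
    intro q hq
    by_cases hd : q.natDegree = 0
    · obtain ⟨a, rfl⟩ := Polynomial.natDegree_eq_zero.mp hd
      exact Eventually.of_forall (fun t => by simp)
    · have hdeg : 0 < q.degree := Polynomial.natDegree_pos_iff_degree_pos.mp (Nat.pos_of_ne_zero hd)
      have htend := Polynomial.tendsto_atTop_of_leadingCoeff_nonneg q hdeg hq.le
      filter_upwards [htend.eventually_gt_atTop 0] with t ht
      rw [sgn_of_pos ht, sgn_of_pos hq]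
  rcases lt_trichotomy q.leadingCoeff 0 with h | h | h
  · have hpos : 0 < (-q).leadingCoeff := by rw [Polynomial.leadingCoeff_neg]; linarith
    filter_upwards [key (-q) hpos] with t ht
    rw [Polynomial.leadingCoeff_neg, Polynomial.eval_neg, sgn_neg', sgn_neg'] at ht
    omega
  · have hq0 : q = 0 := Polynomial.leadingCoeff_eq_zero.mp h
    subst hq0
    exact Eventually.of_forall (fun t => by simp)
  · exact key q h

open Filter in
lemma evsign_both (q : Polynomial ℝ) :
    ∀ᶠ t in atTop, sgn (q.eval t) = sgn q.leadingCoeff ∧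
      sgn (q.eval (-t)) = (-1)^q.natDegree * sgn q.leadingCoeff := by
  by_cases hq : q = 0
  · subst hq
    exact Eventually.of_forall (fun t => by simp [sgn_zero])
  · have hXne : (-(Polynomial.X : Polynomial ℝ)).natDegree ≠ 0 := by
      rw [Polynomial.natDegree_neg, Polynomial.natDegree_X]; omega
    have h1 : ∀ t : ℝ, q.eval (-t) = (q.comp (-Polynomial.X)).eval t := by
      intro t; rw [Polynomial.eval_comp]; simp
    have h2 : (q.comp (-Polynomial.X)).leadingCoeff = q.leadingCoeff * (-1)^q.natDegree := by
      rw [Polynomial.leadingCoeff_comp hXne]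
      congr 1
      rw [Polynomial.leadingCoeff_neg, Polynomial.leadingCoeff_X]
    filter_upwards [evsign q, evsign (q.comp (-Polynomial.X))] with t ht ht'
    refine ⟨ht, ?_⟩
    rw [h1 t, ht', h2]
    rcases Nat.even_or_odd q.natDegree with he | ho
    · rw [he.neg_one_pow, he.neg_one_pow, mul_one, one_mul]
    · rw [ho.neg_one_pow, ho.neg_one_pow, mul_neg_one, neg_one_mul, sgn_neg']

/-- Key formula: a weighted sum over coefficient signs picks out the leading coefficient. -/
lemma sgn_coeff_sum (R : Polynomial ℝ) (D : ℕ) (hD : R.natDegree ≤ D) (w : ℕ → ℤ) :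
    ∑ j ∈ Finset.range (D+1), w j * (sgn (R.coeff j) *
        ∏ k ∈ Finset.Ioc j D, (1 - sgn (R.coeff k) * sgn (R.coeff k)))
      = w R.natDegree * sgn R.leadingCoeff := by
  by_cases hR : R = 0
  · simp [hR, sgn_zero]
  · have hlead : R.leadingCoeff ≠ 0 := Polynomial.leadingCoeff_ne_zero.mpr hR
    rw [Finset.sum_eq_single R.natDegree]
    · have hprod : ∏ k ∈ Finset.Ioc R.natDegree D, (1 - sgn (R.coeff k) * sgn (R.coeff k)) = 1 := by
        refine Finset.prod_eq_one (fun k hk => ?_)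
        rw [Polynomial.coeff_eq_zero_of_natDegree_lt (Finset.mem_Ioc.1 hk).1, sgn_zero]
        ring
      rw [hprod, Polynomial.coeff_natDegree]
      ring
    · intro j hj hjJ
      rcases lt_or_gt_of_ne hjJ with h | h
      · have hzero : ∏ k ∈ Finset.Ioc j D, (1 - sgn (R.coeff k) * sgn (R.coeff k)) = 0 := by
          refine Finset.prod_eq_zero (Finset.mem_Ioc.2 ⟨h, hD⟩) ?_
          rw [Polynomial.coeff_natDegree]
          have := sgn_eq_zero_iff (a := R.leadingCoeff)
          rcases sgn_cases R.leadingCoeff with hs | hs | hs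
          · rw [hs]; ring
          · exact absurd (this.mp hs) hlead
          · rw [hs]; ring
        rw [hzero]
        ring
      · rw [Polynomial.coeff_eq_zero_of_natDegree_lt h, sgn_zero]
        ring
    · intro hJ
      exact absurd (Finset.mem_range.2 (by omega)) hJ

/-! ### the 2^n divisibility for orthant-constant sums of signs -/

open Filter in
lemma orthant_div : ∀ n : ℕ, ∀ ψ : (Fin n → ℝ) → ℤ, IsSumOfSigns ψ →
    (∀ x : Fin n → ℝ, (∀ i, x i ≠ 0) → ψ x = ψ (fun i => if 0 < x i then 1 else -1)) →
    (2:ℤ)^n ∣ ∑ ε : Fin n → Bool, ψ (fun i => if ε i then (1:ℝ) else -1) := by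
  intro n
  induction n with
  | zero => intro ψ _ _; simp
  | succ n ih =>
    intro ψ hψ H
    obtain ⟨s, g, hg⟩ := hψ
    set Q : Fin s → Polynomial (MvPolynomial (Fin n) ℝ) :=
      fun i => MvPolynomial.finSuccEquiv ℝ n (g i) with hQ
    set Rm : (Fin n → ℝ) → Fin s → Polynomial ℝ :=
      fun y i => (Q i).map (MvPolynomial.eval y) with hRm
    set u : (Fin n → ℝ) → ℤ := fun y => ∑ i : Fin s, ∑ j ∈ Finset.range ((Q i).natDegree + 1),
      (if Even j then 1 else 0) * (sgn (MvPolynomial.eval y ((Q i).coeff j)) *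
        ∏ k ∈ Finset.Ioc j ((Q i).natDegree),
          (1 - sgn (MvPolynomial.eval y ((Q i).coeff k)) *
            sgn (MvPolynomial.eval y ((Q i).coeff k)))) with hu
    set Sp : (Fin n → ℝ) → ℤ := fun y => ∑ i : Fin s, sgn ((Rm y i).leadingCoeff) with hSp
    set Sm : (Fin n → ℝ) → ℤ :=
      fun y => ∑ i : Fin s, (-1)^((Rm y i).natDegree) * sgn ((Rm y i).leadingCoeff) with hSm
    have husos : IsSumOfSigns u := by
      rw [hu]
      exact isss_sum _ _ (fun i _ => isss_sum _ _ (fun j _ => isss_zsmul _ (isss_mul (isss_sgn _)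
        (isss_prod _ _ (fun k _ => isss_sub (isss_const 1)
          (isss_mul (isss_sgn _) (isss_sgn _)))))))
    have key1 : ∀ y : Fin n → ℝ, ∀ᶠ t in atTop,
        ψ (Fin.cons t y) = Sp y ∧ ψ (Fin.cons (-t) y) = Sm y := by
      intro y
      have hev : ∀ i : Fin s, ∀ᶠ t in atTop,
          sgn ((Rm y i).eval t) = sgn (Rm y i).leadingCoeff ∧
          sgn ((Rm y i).eval (-t)) = (-1)^((Rm y i).natDegree) * sgn (Rm y i).leadingCoeff :=
        fun i => evsign_both _
      filter_upwards [Filter.eventually_all.2 hev] with t ht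
      have heval : ∀ (z : ℝ) (i : Fin s),
          MvPolynomial.eval (Fin.cons z y) (g i) = (Rm y i).eval z := by
        intro z i
        rw [hRm]
        exact MvPolynomial.eval_eq_eval_mv_eval' y z (g i)
      constructor
      · rw [hg, hSp]
        refine Finset.sum_congr rfl (fun i _ => ?_)
        rw [heval t i, (ht i).1]
      · rw [hg, hSm]
        refine Finset.sum_congr rfl (fun i _ => ?_)
        rw [heval (-t) i, (ht i).2]
    have key2 : ∀ y, Sp y + Sm y = 2 * u y := by
      intro y
      rw [hSp, hSm, hu]
      dsimp only
      rw [← Finset.sum_add_distrib, Finset.mul_sum]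
      refine Finset.sum_congr rfl (fun i _ => ?_)
      have hcoeff : ∀ j, MvPolynomial.eval y ((Q i).coeff j) = (Rm y i).coeff j := by
        intro j; rw [hRm]; simp [Polynomial.coeff_map]
      have hinner := sgn_coeff_sum (Rm y i) ((Q i).natDegree)
        Polynomial.natDegree_map_le (fun j => if Even j then (1:ℤ) else 0)
      simp only [hcoeff]
      rw [hinner]
      rcases Nat.even_or_odd ((Rm y i).natDegree) with he | ho
      · rw [he.neg_one_pow, if_pos he]; ring
      · rw [ho.neg_one_pow, if_neg (Nat.not_even_iff_odd.mpr ho)]; ring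
    have hSval : ∀ y : Fin n → ℝ, (∀ i, y i ≠ 0) →
        Sp y = ψ (Fin.cons 1 (fun i => if 0 < y i then 1 else -1)) ∧
        Sm y = ψ (Fin.cons (-1) (fun i => if 0 < y i then 1 else -1)) := by
      intro y hy
      obtain ⟨t, ⟨h1, h2⟩, ht0⟩ := ((key1 y).and (eventually_gt_atTop 0)).exists
      have hnz1 : ∀ i, (Fin.cons t y : Fin (n+1) → ℝ) i ≠ 0 := by
        intro i
        refine Fin.cases ?_ ?_ i
        · simpa using ne_of_gt ht0
        · intro i'; simpa using hy i'
      have hnz2 : ∀ i, (Fin.cons (-t) y : Fin (n+1) → ℝ) i ≠ 0 := by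
        intro i
        refine Fin.cases ?_ ?_ i
        · simpa using (by linarith : -t ≠ 0)
        · intro i'; simpa using hy i'
      constructor
      · rw [← h1, H (Fin.cons t y) hnz1]
        congr 1
        funext i
        refine Fin.cases ?_ ?_ i
        · simp [ht0]
        · intro i'; simp
      · rw [← h2, H (Fin.cons (-t) y) hnz2]
        congr 1
        funext i
        refine Fin.cases ?_ ?_ i
        · have : ¬ (0:ℝ) < -t := by linarith
          simp [this]
        · intro i'; simp
    have hu2 : ∀ y : Fin n → ℝ, (∀ i, y i ≠ 0) →
        u y = u (fun i => if 0 < y i then 1 else -1) := by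
      intro y hy
      set y' : Fin n → ℝ := fun i => if 0 < y i then 1 else -1 with hy'
      have hy'nz : ∀ i, y' i ≠ 0 := by
        intro i; rw [hy']; dsimp only; split <;> norm_num
      have hy'pat : (fun i => if 0 < y' i then (1:ℝ) else -1) = y' := by
        funext i
        rw [hy']
        dsimp only
        by_cases h : 0 < y i
        · simp [h]
        · simp [h]
      have e1 := hSval y hy
      have e2 := hSval y' hy'nz
      have h2u : 2 * u y = 2 * u y' := by
        rw [← key2 y, ← key2 y', e1.1, e1.2, e2.1, e2.2, hy'pat]
      omega
    have hdvd := ih u husos hu2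
    have hpt : ∀ (b : Bool) (ε' : Fin n → Bool),
        (fun i => if (Fin.cons b ε' : Fin (n+1) → Bool) i then (1:ℝ) else -1)
          = Fin.cons (if b then (1:ℝ) else -1) (fun i => if ε' i then (1:ℝ) else -1) := by
      intro b ε'
      funext i
      refine Fin.cases ?_ ?_ i
      · simp
      · intro i'; simp
    have hptpat : ∀ ε' : Fin n → Bool,
        (fun i => if 0 < (if ε' i then (1:ℝ) else -1) then (1:ℝ) else -1)
          = fun i => if ε' i then (1:ℝ) else -1 := by
      intro ε'
      funext i
      cases hb : ε' i <;> norm_num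
    have hptnz : ∀ ε' : Fin n → Bool, ∀ i, (if ε' i then (1:ℝ) else -1) ≠ 0 := by
      intro ε' i; cases hb : ε' i <;> norm_num
    have hsplit : ∑ ε : Fin (n+1) → Bool, ψ (fun i => if ε i then (1:ℝ) else -1)
        = ∑ ε' : Fin n → Bool, (2 * u (fun i => if ε' i then (1:ℝ) else -1)) := by
      rw [← (Fin.consEquiv (fun _ : Fin (n+1) => Bool)).sum_comp
        (fun ε => ψ (fun i => if ε i then (1:ℝ) else -1))]
      rw [Fintype.sum_prod_type]
      rw [Fintype.sum_bool]
      rw [← Finset.sum_add_distrib]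
      refine Finset.sum_congr rfl (fun ε' _ => ?_)
      have hS := hSval (fun i => if ε' i then (1:ℝ) else -1) (hptnz ε')
      rw [hptpat ε'] at hS
      have := key2 (fun i => if ε' i then (1:ℝ) else -1)
      rw [hS.1, hS.2] at this
      rw [← this]
      simp only [Fin.consEquiv_apply]
      rw [hpt true ε', hpt false ε']
      simp
    rw [hsplit, ← Finset.mul_sum, pow_succ]
    obtain ⟨c, hc⟩ := hdvd
    exact ⟨c, by rw [hc]; ring⟩

/-! ### difference operators -/

def opA (G : ℤ → ℤ) : ℤ → ℤ := fun c => G (c+1) + G (c-1)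
def opL (G : ℤ → ℤ) : ℤ → ℤ := fun c => G (c+1) - 2 * G c + G (c-1)

noncomputable def endA : Module.End ℤ (ℤ → ℤ) :=
  { toFun := opA
    map_add' := fun G H => by funext c; simp only [opA, Pi.add_apply]; ring
    map_smul' := fun m G => by
      funext c; simp only [opA, Pi.smul_apply, smul_eq_mul, RingHom.id_apply]; ring }

noncomputable def endL : Module.End ℤ (ℤ → ℤ) := endA - 2

lemma two_end_apply (G : ℤ → ℤ) (c : ℤ) : ((2 : Module.End ℤ (ℤ → ℤ)) G) c = 2 * G c := by
  have h : (2 : Module.End ℤ (ℤ → ℤ)) = 1 + 1 := by norm_num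
  rw [h, LinearMap.add_apply, Module.End.one_apply, Pi.add_apply]
  ring

lemma endL_apply (G : ℤ → ℤ) (c : ℤ) : (endL G) c = opL G c := by
  rw [endL, LinearMap.sub_apply, Pi.sub_apply, two_end_apply]
  simp only [endA, LinearMap.coe_mk, AddHom.coe_mk, opA, opL]
  ring

lemma end_pow_apply (f : Module.End ℤ (ℤ → ℤ)) (op : (ℤ → ℤ) → (ℤ → ℤ))
    (h : ∀ G, f G = op G) : ∀ (k : ℕ) (G : ℤ → ℤ), (f^k) G = op^[k] G := by
  intro k
  induction k with
  | zero => intro G; simp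
  | succ k ih =>
    intro G
    rw [pow_succ, Module.End.mul_apply, h G, ih (op G), ← Function.iterate_succ_apply]

lemma two_end_pow_apply (m : ℕ) (G : ℤ → ℤ) (c : ℤ) :
    (((2 : Module.End ℤ (ℤ → ℤ))^m) G) c = 2^m * G c := by
  induction m generalizing G with
  | zero => simp
  | succ m ih =>
    rw [pow_succ, Module.End.mul_apply, ih, two_end_apply]
    ring

lemma opA_binom (k : ℕ) (G : ℤ → ℤ) (c : ℤ) :
    opA^[k] G c = ∑ i ∈ Finset.range (k+1), (k.choose i : ℤ) * (2^i * opL^[k-i] G c) := by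
  have hcomm : Commute (2 : Module.End ℤ (ℤ → ℤ)) endL := by
    rw [Commute, SemiconjBy, two_mul, mul_two]
  have hA : endA = 2 + endL := by rw [endL]; abel
  have hpow := hcomm.add_pow' k
  rw [← hA] at hpow
  have h1 : opA^[k] G c = ((endA^k) G) c := by
    rw [end_pow_apply endA opA (fun G => rfl) k G]
  rw [h1, hpow, LinearMap.coe_sum, Finset.sum_apply, Finset.sum_apply]
  rw [Finset.Nat.sum_antidiagonal_eq_sum_range_succ_mk]
  refine Finset.sum_congr rfl (fun i hi => ?_)
  rw [LinearMap.smul_apply, Pi.smul_apply, Module.End.mul_apply]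
  rw [end_pow_apply endL opL (fun G => funext (endL_apply G)) (k-i) G]
  rw [two_end_pow_apply]
  simp only [smul_eq_mul]
  ring

/-! ### more binomial coefficient identities -/

lemma Ch_one_right (a : ℚ) : Ch a 1 = a := by
  rw [Ch_def]
  simp [descPochhammer_one]

lemma Ch_secdiff (b : ℚ) (q : ℕ) :
    Ch (b+1) (q+2) - 2 * Ch b (q+2) + Ch (b-1) (q+2) = Ch (b-1) q := by
  have p1 := Ch_pascal b (q+1)
  have p2 := Ch_pascal (b-1) (q+1)
  have p3 := Ch_pascal (b-1) q
  rw [sub_add_cancel] at p2 p3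
  linarith

/-! ### expansion in the binomial basis -/

lemma binomPoly_zero : binomPoly 0 = 1 := by
  simp [binomPoly, descPochhammer_zero]

lemma binomPoly_coeff_top (d : ℕ) : (binomPoly d).coeff d = ((d.factorial : ℚ))⁻¹ := by
  rw [binomPoly, Polynomial.coeff_smul]
  have h1 : (descPochhammer ℚ d).coeff d = 1 := by
    have hm := monic_descPochhammer ℚ d
    have hd := descPochhammer_natDegree ℚ d
    have := hm.coeff_natDegree
    rw [hd] at this
    exact this
  rw [h1]
  simp

lemma binomPoly_natDegree_le (d : ℕ) : (binomPoly d).natDegree ≤ d := by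
  refine le_trans (Polynomial.natDegree_smul_le _ _) ?_
  exact le_of_eq (descPochhammer_natDegree ℚ d)

lemma binom_expand : ∀ (d : ℕ) (P : Polynomial ℚ), P.natDegree ≤ d →
    ∃ c : ℕ → ℚ, P = ∑ r ∈ Finset.range (d+1), c r • binomPoly r := by
  intro d
  induction d with
  | zero =>
    intro P hP
    refine ⟨fun _ => P.coeff 0, ?_⟩
    conv_lhs => rw [Polynomial.eq_C_of_natDegree_le_zero hP]
    rw [Finset.sum_range_one, binomPoly_zero, Polynomial.smul_eq_C_mul, mul_one]
  | succ d ihd =>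
    intro P hP
    set a := P.coeff (d+1) with ha
    set Q := P - (a * (d+1).factorial) • binomPoly (d+1) with hQdef
    have hfne : ((d+1).factorial : ℚ) ≠ 0 := by exact_mod_cast (d+1).factorial_ne_zero
    have hQdeg : Q.natDegree ≤ d := by
      rw [Polynomial.natDegree_le_iff_coeff_eq_zero]
      intro m hm
      rw [hQdef, Polynomial.coeff_sub, Polynomial.coeff_smul]
      rcases eq_or_lt_of_le (Nat.succ_le_of_lt hm) with h | h
      · rw [← h, binomPoly_coeff_top, ← ha, smul_eq_mul]
        field_simp
        ring
      · rw [Polynomial.coeff_eq_zero_of_natDegree_lt (lt_of_le_of_lt hP h),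
          Polynomial.coeff_eq_zero_of_natDegree_lt (lt_of_le_of_lt (binomPoly_natDegree_le (d+1)) h)]
        simp
    obtain ⟨c, hc⟩ := ihd Q hQdeg
    refine ⟨fun r => if r = d+1 then a * (d+1).factorial else c r, ?_⟩
    rw [Finset.sum_range_succ]
    dsimp only
    rw [if_pos rfl]
    have hcongr : ∑ r ∈ Finset.range (d+1), (if r = d+1 then a * ((d+1).factorial : ℚ) else c r) • binomPoly r
        = ∑ r ∈ Finset.range (d+1), c r • binomPoly r := by
      refine Finset.sum_congr rfl (fun r hr => ?_)
      rw [if_neg (by simp only [Finset.mem_range] at hr; omega)]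
    rw [hcongr, ← hc, hQdef]
    ring

/-! ### the orthant sum as an iterated operator -/

lemma sum_eps : ∀ (k : ℕ) (G : ℤ → ℤ) (d : ℤ),
    ∑ ε : Fin k → Bool, G (d + ∑ i : Fin k, (if ε i then (1:ℤ) else -1)) = opA^[k] G d := by
  intro k
  induction k with
  | zero =>
    intro G d
    simp
  | succ k ih =>
    intro G d
    rw [← (Fin.consEquiv (fun _ : Fin (k+1) => Bool)).sum_comp
      (fun ε => G (d + ∑ i : Fin (k+1), (if ε i then (1:ℤ) else -1)))]
    rw [Fintype.sum_prod_type, Fintype.sum_bool]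
    have hs : ∀ (b : Bool) (ε' : Fin k → Bool),
        ∑ i : Fin (k+1), (if (Fin.consEquiv (fun _ : Fin (k+1) => Bool) (b, ε')) i then (1:ℤ) else -1)
          = (if b then (1:ℤ) else -1) + ∑ i : Fin k, (if ε' i then (1:ℤ) else -1) := by
      intro b ε'
      rw [Fin.sum_univ_succ]
      simp [Fin.consEquiv]
    have h1 : ∀ ε' : Fin k → Bool,
        G (d + ∑ i : Fin (k+1), (if (Fin.consEquiv (fun _ : Fin (k+1) => Bool) (true, ε')) i then (1:ℤ) else -1))
          = G ((d+1) + ∑ i : Fin k, (if ε' i then (1:ℤ) else -1)) := by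
      intro ε'; rw [hs]; congr 1; simp; ring
    have h2 : ∀ ε' : Fin k → Bool,
        G (d + ∑ i : Fin (k+1), (if (Fin.consEquiv (fun _ : Fin (k+1) => Bool) (false, ε')) i then (1:ℤ) else -1))
          = G ((d-1) + ∑ i : Fin k, (if ε' i then (1:ℤ) else -1)) := by
      intro ε'; rw [hs]; congr 1; simp; ring
    rw [Finset.sum_congr rfl (fun ε' _ => h1 ε'), Finset.sum_congr rfl (fun ε' _ => h2 ε'),
      ih G (d+1), ih G (d-1), Function.iterate_succ_apply']
    rfl

/-! ### direction (a) ⇒ (b) -/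

lemma dir_ab (P : Polynomial ℚ)
    (hA : ∀ n : ℕ, 1 ≤ n → ∀ φ : (Fin n → ℝ) → ℤ, IsSumOfSigns φ →
      ∃ ψ : (Fin n → ℝ) → ℤ, IsSumOfSigns ψ ∧ ∀ x, (ψ x : ℚ) = P.eval ((φ x : ℚ))) :
    ∃ (N : ℕ) (np : ℕ → ℤ), (∀ p, (2:ℤ)^(p/2) ∣ np p) ∧
      P = ∑ p ∈ Finset.range (N+1), (np p : ℚ) • binomPoly p := by
  classical
  -- the integer-value function of P
  have hFex : ∀ m : ℤ, ∃ z : ℤ, (z:ℚ) = P.eval ((m:ℤ):ℚ) := by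
    intro m
    obtain ⟨ψ, _, hψ2⟩ := hA 1 le_rfl (fun _ => m) (isss_const m)
    exact ⟨ψ (fun _ => 0), hψ2 (fun _ => 0)⟩
  choose F hF using hFex
  -- expansion of P in the binomial basis
  set N := P.natDegree with hN
  obtain ⟨c, hc⟩ := binom_expand N P le_rfl
  have hPeval : ∀ a : ℚ, P.eval a = ∑ r ∈ Finset.range (N+1), c r * Ch a r := by
    intro a
    conv_lhs => rw [hc]
    rw [Polynomial.eval_finset_sum]
    exact Finset.sum_congr rfl (fun r _ => by rw [Polynomial.eval_smul, smul_eq_mul, Ch])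
  -- integrality of the coefficients
  set cz : ℕ → ℤ := fun r => if h : ∃ z : ℤ, c r = (z:ℚ) then h.choose else 0 with hczd
  have hczspec : ∀ r, (∃ z : ℤ, c r = (z:ℚ)) → c r = (cz r : ℚ) := by
    intro r hr
    rw [hczd]
    dsimp only
    rw [dif_pos hr]
    exact hr.choose_spec
  have hint : ∀ j, j ≤ N → ∃ z : ℤ, c j = (z:ℚ) := by
    intro j
    induction j using Nat.strong_induction_on with
    | _ j ih =>
    intro hjN
    have h1 : ((F (j:ℤ)) : ℚ) = ∑ r ∈ Finset.range (N+1), c r * ((j.choose r : ℕ) : ℚ) := by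
      rw [hF (j:ℤ)]
      have : (((j:ℤ)):ℚ) = ((j:ℕ):ℚ) := by push_cast; ring
      rw [this, hPeval]
      exact Finset.sum_congr rfl (fun r _ => by rw [Ch_nat])
    have h2 : ∑ r ∈ Finset.range (j+1), c r * ((j.choose r : ℕ) : ℚ)
        = ∑ r ∈ Finset.range (N+1), c r * ((j.choose r : ℕ) : ℚ) := by
      refine Finset.sum_subset (Finset.range_subset_range.2 (by omega)) (fun r hr hnr => ?_)
      simp only [Finset.mem_range] at hr hnr
      rw [Nat.choose_eq_zero_of_lt (by omega)]
      simp
    have h3 : ∀ r ∈ Finset.range j, c r * ((j.choose r : ℕ) : ℚ)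
        = ((cz r * (j.choose r : ℤ) : ℤ) : ℚ) := by
      intro r hr
      simp only [Finset.mem_range] at hr
      rw [hczspec r (ih r hr (by omega))]
      push_cast
      ring
    refine ⟨F (j:ℤ) - ∑ r ∈ Finset.range j, cz r * (j.choose r : ℤ), ?_⟩
    have h4 := h1
    rw [← h2, Finset.sum_range_succ, Finset.sum_congr rfl h3, Nat.choose_self] at h4
    push_cast at h4 ⊢
    linarith
  have hceq : ∀ r, r ≤ N → c r = (cz r : ℚ) := fun r hr => hczspec r (hint r hr)
  -- the divisibility of iterated A-operator values
  have hdiamond : ∀ k, 1 ≤ k → ∀ d : ℤ, (2:ℤ)^k ∣ opA^[k] F d := by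
    intro k hk d
    set φ : (Fin k → ℝ) → ℤ := fun x => d + ∑ i : Fin k, sgn (x i) with hφ
    have hφs : IsSumOfSigns φ := by
      refine isss_congr (fun x => ?_) (isss_add (isss_const d) (isss_sum Finset.univ
        (fun i => fun x => sgn (MvPolynomial.eval x (MvPolynomial.X i))) (fun i _ => isss_sgn _)))
      simp [MvPolynomial.eval_X, hφ]
    obtain ⟨ψ, hψs, hψe⟩ := hA k hk φ hφs
    have hsgnpat : ∀ x : Fin k → ℝ, (∀ i, x i ≠ 0) →
        ∀ i, sgn ((fun i => if 0 < x i then (1:ℝ) else -1) i) = sgn (x i) := by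
      intro x hx i
      dsimp only
      by_cases h : 0 < x i
      · rw [if_pos h, sgn_one, sgn_of_pos h]
      · rw [if_neg h, sgn_neg_one, sgn_of_neg (lt_of_le_of_ne (not_lt.1 h) (hx i))]
    have hH : ∀ x, (∀ i, x i ≠ 0) → ψ x = ψ (fun i => if 0 < x i then 1 else -1) := by
      intro x hx
      have hφeq : φ x = φ (fun i => if 0 < x i then 1 else -1) := by
        rw [hφ]
        dsimp only
        congr 1
        exact (Finset.sum_congr rfl (fun i _ => (hsgnpat x hx i))).symm
      have : (ψ x : ℚ) = ((ψ (fun i => if 0 < x i then 1 else -1)) : ℚ) := by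
        rw [hψe, hψe, hφeq]
      exact_mod_cast this
    have hdvd := orthant_div k ψ hψs hH
    have hsum : ∑ ε : Fin k → Bool, ψ (fun i => if ε i then (1:ℝ) else -1)
        = ∑ ε : Fin k → Bool, F (d + ∑ i : Fin k, (if ε i then (1:ℤ) else -1)) := by
      refine Finset.sum_congr rfl (fun ε _ => ?_)
      have h1 : φ (fun i => if ε i then (1:ℝ) else -1) = d + ∑ i : Fin k, (if ε i then (1:ℤ) else -1) := by
        rw [hφ]
        dsimp only
        congr 1
        refine Finset.sum_congr rfl (fun i _ => ?_)
        cases hb : ε i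
        · rw [if_neg (by simp), if_neg (by simp), sgn_neg_one]
        · rw [if_pos rfl, if_pos rfl, sgn_one]
      have h2 := hψe (fun i => if ε i then (1:ℝ) else -1)
      rw [h1] at h2
      have h3 := hF (d + ∑ i : Fin k, (if ε i then (1:ℤ) else -1))
      exact_mod_cast h2.trans h3.symm
    rw [hsum, sum_eps k F d] at hdvd
    exact hdvd
  -- divisibility of the iterated L-operator values
  have hLdvd : ∀ j, ∀ d : ℤ, (2:ℤ)^j ∣ opL^[j] F d := by
    intro j
    induction j using Nat.strong_induction_on with
    | _ j ih =>
    intro d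
    rcases Nat.eq_zero_or_pos j with rfl | hj
    · simp
    · have hdvdA := hdiamond j hj d
      rw [opA_binom j F d, Finset.sum_range_succ'] at hdvdA
      have hterm : ∀ i ∈ Finset.range j,
          (2:ℤ)^j ∣ (j.choose (i+1) : ℤ) * (2^(i+1) * opL^[j-(i+1)] F d) := by
        intro i hi
        simp only [Finset.mem_range] at hi
        obtain ⟨w, hw⟩ := ih (j-(i+1)) (by omega) d
        have hpow : (2:ℤ)^j = 2^(i+1) * 2^(j-(i+1)) := by
          rw [← pow_add]; congr 1; omega
        exact ⟨(j.choose (i+1) : ℤ) * w, by rw [hw, hpow]; ring⟩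
      have hsumdvd := Finset.dvd_sum hterm
      have hfinal := dvd_sub hdvdA hsumdvd
      simpa using hfinal
  -- value formula for the iterated L-operator
  have hLval : ∀ j (m : ℤ), ((opL^[j] F m : ℤ) : ℚ)
      = ∑ r ∈ Finset.range (N+1), (cz r : ℚ) *
          (if 2*j ≤ r then Ch ((m:ℚ) - (j:ℕ)) (r - 2*j) else 0) := by
    intro j
    induction j with
    | zero =>
      intro m
      simp only [Function.iterate_zero, id_eq]
      rw [hF m, hPeval]
      refine Finset.sum_congr rfl (fun r hr => ?_)
      simp only [Finset.mem_range] at hr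
      rw [hceq r (by omega), if_pos (by omega)]
      norm_num
    | succ j ihj =>
      intro m
      rw [Function.iterate_succ_apply']
      have hv : opL (opL^[j] F) m = opL^[j] F (m+1) - 2 * opL^[j] F m + opL^[j] F (m-1) := rfl
      rw [hv]
      push_cast
      have i1 := ihj (m+1)
      have i2 := ihj m
      have i3 := ihj (m-1)
      push_cast at i1 i3
      rw [i1, i2, i3]
      rw [Finset.mul_sum, ← Finset.sum_sub_distrib, ← Finset.sum_add_distrib]
      refine Finset.sum_congr rfl (fun r hr => ?_)
      have a1 : (m:ℚ) + 1 - (j:ℕ) = ((m:ℚ) - (j:ℕ)) + 1 := by ring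
      have a2 : (m:ℚ) - 1 - (j:ℕ) = ((m:ℚ) - (j:ℕ)) - 1 := by ring
      have a3 : (m:ℚ) - ((j:ℕ)+1) = ((m:ℚ) - (j:ℕ)) - 1 := by ring
      rw [a1, a2, a3]
      set b : ℚ := (m:ℚ) - (j:ℕ) with hb
      by_cases hcase : 2*(j+1) ≤ r
      · rw [if_pos hcase, if_pos (by omega), if_pos (by omega), if_pos (by omega)]
        rw [show r - 2*j = (r - 2*(j+1)) + 2 from by omega]
        have hsd := Ch_secdiff b (r - 2*(j+1))
        linear_combination (cz r : ℚ) * hsd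
      · rw [if_neg hcase]
        by_cases hcase2 : 2*j ≤ r
        · rw [if_pos hcase2, if_pos hcase2, if_pos hcase2]
          rcases (by omega : r - 2*j = 0 ∨ r - 2*j = 1) with h0 | h0 <;> rw [h0]
          · rw [Ch_zero_right, Ch_zero_right, Ch_zero_right]; ring
          · rw [Ch_one_right, Ch_one_right, Ch_one_right]; ring
        · rw [if_neg hcase2, if_neg hcase2, if_neg hcase2]; ring
  -- extraction of the divisibility of coefficients
  have hTj : ∀ j e : ℕ, 2*j + e ≤ N →
      (2:ℤ)^j ∣ ∑ q ∈ Finset.range (e+1), cz (2*j+q) * (e.choose q : ℤ) := by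
    intro j e hle
    have hd := hLdvd j ((j:ℤ) + (e:ℤ))
    have hv := hLval j ((j:ℤ) + (e:ℤ))
    have harg : ((((j:ℤ) + (e:ℤ)):ℤ):ℚ) - ((j:ℕ):ℚ) = ((e:ℕ):ℚ) := by push_cast; ring
    rw [harg] at hv
    have hsub : Finset.Icc (2*j) (2*j+e) ⊆ Finset.range (N+1) := by
      intro r hr
      simp only [Finset.mem_Icc] at hr
      simp only [Finset.mem_range]
      omega
    have hzero : ∀ r ∈ Finset.range (N+1), r ∉ Finset.Icc (2*j) (2*j+e) →
        (cz r : ℚ) * (if 2*j ≤ r then Ch ((e:ℕ):ℚ) (r - 2*j) else 0) = 0 := by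
      intro r hr hnr
      simp only [Finset.mem_Icc, not_and_or, not_le] at hnr
      rcases hnr with h | h
      · rw [if_neg (by omega)]; ring
      · rw [if_pos (by omega), Ch_nat, Nat.choose_eq_zero_of_lt (by omega)]
        simp
    rw [← Finset.sum_subset hsub hzero] at hv
    have hbij : ∑ r ∈ Finset.Icc (2*j) (2*j+e),
        (cz r : ℚ) * (if 2*j ≤ r then Ch ((e:ℕ):ℚ) (r - 2*j) else 0)
        = ∑ q ∈ Finset.range (e+1), ((cz (2*j+q) * (e.choose q : ℤ) : ℤ) : ℚ) := by
      rw [Finset.sum_bij' (fun r _ => r - 2*j) (fun q _ => 2*j+q)]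
      · intro r hr; simp only [Finset.mem_Icc] at hr; simp only [Finset.mem_range]; omega
      · intro q hq; simp only [Finset.mem_range] at hq; simp only [Finset.mem_Icc]; omega
      · intro r hr; simp only [Finset.mem_Icc] at hr; omega
      · intro q hq; omega
      · intro r hr
        simp only [Finset.mem_Icc] at hr
        rw [if_pos (by omega)]
        rw [show 2*j + (r - 2*j) = r from by omega, Ch_nat]
        push_cast
        ring
    rw [hbij] at hv
    have heq : opL^[j] F ((j:ℤ) + (e:ℤ)) = ∑ q ∈ Finset.range (e+1), cz (2*j+q) * (e.choose q : ℤ) := by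
      have := hv
      rw [← Int.cast_sum] at this
      exact_mod_cast this
    rwa [heq] at hd
  have hczdvd : ∀ j e : ℕ, 2*j + e ≤ N → (2:ℤ)^j ∣ cz (2*j+e) := by
    intro j e
    induction e using Nat.strong_induction_on with
    | _ e ih =>
    intro hle
    have hT := hTj j e hle
    rw [Finset.sum_range_succ, Nat.choose_self] at hT
    have hrest : (2:ℤ)^j ∣ ∑ q ∈ Finset.range e, cz (2*j+q) * (e.choose q : ℤ) := by
      refine Finset.dvd_sum (fun q hq => ?_)
      have hq' : q < e := Finset.mem_range.1 hq
      exact Dvd.dvd.mul_right (ih q hq' (by omega)) _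
    have hfin := dvd_sub hT hrest
    simpa using hfin
  -- conclusion
  refine ⟨N, fun p => if p ≤ N then cz p else 0, ?_, ?_⟩
  · intro p
    dsimp only
    by_cases hp : p ≤ N
    · rw [if_pos hp]
      have h := hczdvd (p/2) (p - 2*(p/2)) (by omega)
      rwa [show 2*(p/2) + (p - 2*(p/2)) = p from by omega] at h
    · rw [if_neg hp]
      exact dvd_zero _
  · conv_lhs => rw [hc]
    refine Finset.sum_congr rfl (fun r hr => ?_)
    simp only [Finset.mem_range] at hr
    dsimp only
    rw [if_pos (by omega : r ≤ N), hceq r (by omega)]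

theorem polynomial_operator_on_sums_of_signs_iff (P : Polynomial ℚ) :
    (∀ n : ℕ, 1 ≤ n → ∀ φ : (Fin n → ℝ) → ℤ, IsSumOfSigns φ →
      ∃ ψ : (Fin n → ℝ) → ℤ, IsSumOfSigns ψ ∧ ∀ x, (ψ x : ℚ) = P.eval ((φ x : ℚ))) ↔
    (∃ (N : ℕ) (np : ℕ → ℤ), (∀ p, (2 : ℤ) ^ (p / 2) ∣ np p) ∧
      P = ∑ p ∈ Finset.range (N + 1), (np p : ℚ) • binomPoly p) := by
  constructor
  · exact fun hA => dir_ab P hA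
  · rintro ⟨N, np, hdvd, hP⟩
    exact dir_ba P N np hdvd hP
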